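/- arXiv:1301.1452 — 3 statements merged into one kernel-verified Lean document; each statement's English description precedes it below -/
import Mathlib

section
/- Let F1, F2, F3, F4 be finite fields with |F_i \ {0}| = n_i for i = 1, 2, 3, 4, where n1 ≥ n2 ≥ n3 ≥ n4. If R = F1 × F2 × F3 × F4, then α(Γ(R)) = n1·(n2n3 + n2n4 + n3n4 + n2 + n3) + max{n1 + n1n4, n2n3 + n2n3n4, n1n4 + n2n3n4}. -/
/-- The zero-divisor graph `Γ(R)`: vertices are the nonzero zero-divisors of `R`,
with distinct vertices `x`, `y` adjacent iff `x * y = 0`. -/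
def zdvGraph (R : Type*) [CommRing R] :
    SimpleGraph {x : R // x ≠ 0 ∧ ∃ y ≠ 0, x * y = 0} where
  Adj x y := x ≠ y ∧ (x : R) * y = 0
  symm := ⟨fun x y ⟨hxy, h⟩ => ⟨hxy.symm, by rwa [mul_comm]⟩⟩
  loopless := ⟨fun x ⟨h, _⟩ => h rfl⟩

/-- The independence number of a simple graph: the maximum cardinality of a set of
pairwise non-adjacent vertices. -/
noncomputable def indepNum {V : Type*} (G : SimpleGraph V) : ℕ :=
  sSup {n | ∃ s : Finset V, (s : Set V).Pairwise (fun a b => ¬ G.Adj a b) ∧ s.card = n}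


-- auxiliary material

abbrev B4 := Bool × Bool × Bool × Bool

def meetB (p q : B4) : Bool :=
  (p.1 && q.1) || (p.2.1 && q.2.1) || (p.2.2.1 && q.2.2.1) || (p.2.2.2 && q.2.2.2)

def wt4 (n₁ n₂ n₃ n₄ : ℕ) (p : B4) : ℕ :=
  (bif p.1 then n₁ else 1) * (bif p.2.1 then n₂ else 1) *
    (bif p.2.2.1 then n₃ else 1) * (bif p.2.2.2 then n₄ else 1)

def star1 : Finset B4 := {(true,false,false,false),(true,true,false,false),(true,false,true,false),(true,false,false,true),(true,true,true,false),(true,true,false,true),(true,false,true,true)}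
def star2 : Finset B4 := {(false,true,false,false),(true,true,false,false),(false,true,true,false),(false,true,false,true),(true,true,true,false),(true,true,false,true),(false,true,true,true)}
def star3 : Finset B4 := {(false,false,true,false),(true,false,true,false),(false,true,true,false),(false,false,true,true),(true,true,true,false),(true,false,true,true),(false,true,true,true)}
def star4 : Finset B4 := {(false,false,false,true),(true,false,false,true),(false,true,false,true),(false,false,true,true),(true,true,false,true),(true,false,true,true),(false,true,true,true)}

def pairA : Bool → B4 := fun a => bif a then (true,true,false,false) else (false,false,true,true)
def pairB : Bool → B4 := fun b => bif b then (true,false,true,false) else (false,true,false,true)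
def pairC : Bool → B4 := fun c => bif c then (true,false,false,true) else (false,true,true,false)

def fam2 (a b c : Bool) : Finset B4 :=
  {pairA a, pairB b, pairC c, (true,true,true,false),(true,true,false,true),(true,false,true,true),(false,true,true,true)}

lemma mem_star1 : ∀ p : B4, p.1 = true → p = (true,true,true,true) ∨ p ∈ star1 := by decide
lemma mem_star2 : ∀ p : B4, p.2.1 = true → p = (true,true,true,true) ∨ p ∈ star2 := by decide
lemma mem_star3 : ∀ p : B4, p.2.2.1 = true → p = (true,true,true,true) ∨ p ∈ star3 := by decide
lemma mem_star4 : ∀ p : B4, p.2.2.2 = true → p = (true,true,true,true) ∨ p ∈ star4 := by decide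

set_option synthInstance.maxSize 512 in
set_option maxHeartbeats 1000000 in
lemma mem_fam2 : ∀ (a b c : Bool) (p : B4),
    p = (false,false,false,false) ∨ p = (true,true,true,true) ∨
    p = (true,false,false,false) ∨ p = (false,true,false,false) ∨
    p = (false,false,true,false) ∨ p = (false,false,false,true) ∨
    p = pairA (!a) ∨ p = pairB (!b) ∨ p = pairC (!c) ∨ p ∈ fam2 a b c := by decide

lemma cover (Q : Finset B4)
    (hbot : ∀ p ∈ Q, p ≠ (false,false,false,false))
    (htop : ∀ p ∈ Q, p ≠ (true,true,true,true))
    (hmeet : ∀ p ∈ Q, ∀ q ∈ Q, meetB p q = true) :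
    Q ⊆ star1 ∨ Q ⊆ star2 ∨ Q ⊆ star3 ∨ Q ⊆ star4 ∨ ∃ a b c, Q ⊆ fam2 a b c := by
  by_cases hs1 : (true,false,false,false) ∈ Q
  · refine Or.inl fun p hp => ?_
    have hm := hmeet _ hs1 p hp
    simp only [meetB, Bool.false_and, Bool.true_and, Bool.or_false, Bool.false_or] at hm
    rcases mem_star1 p hm with h | h
    · exact absurd h (htop p hp)
    · exact h
  by_cases hs2 : (false,true,false,false) ∈ Q
  · refine Or.inr (Or.inl fun p hp => ?_)
    have hm := hmeet _ hs2 p hp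
    simp only [meetB, Bool.false_and, Bool.true_and, Bool.or_false, Bool.false_or] at hm
    rcases mem_star2 p hm with h | h
    · exact absurd h (htop p hp)
    · exact h
  by_cases hs3 : (false,false,true,false) ∈ Q
  · refine Or.inr (Or.inr (Or.inl fun p hp => ?_))
    have hm := hmeet _ hs3 p hp
    simp only [meetB, Bool.false_and, Bool.true_and, Bool.or_false, Bool.false_or] at hm
    rcases mem_star3 p hm with h | h
    · exact absurd h (htop p hp)
    · exact h
  by_cases hs4 : (false,false,false,true) ∈ Q
  · refine Or.inr (Or.inr (Or.inr (Or.inl fun p hp => ?_)))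
    have hm := hmeet _ hs4 p hp
    simp only [meetB, Bool.false_and, Bool.true_and, Bool.or_false, Bool.false_or] at hm
    rcases mem_star4 p hm with h | h
    · exact absurd h (htop p hp)
    · exact h
  have hA : ∃ a : Bool, pairA (!a) ∉ Q := by
    by_cases h : (true,true,false,false) ∈ Q
    · exact ⟨true, fun hc => absurd (hmeet _ h _ hc) (by decide)⟩
    · exact ⟨false, h⟩
  have hB : ∃ b : Bool, pairB (!b) ∉ Q := by
    by_cases h : (true,false,true,false) ∈ Q
    · exact ⟨true, fun hc => absurd (hmeet _ h _ hc) (by decide)⟩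
    · exact ⟨false, h⟩
  have hC : ∃ c : Bool, pairC (!c) ∉ Q := by
    by_cases h : (true,false,false,true) ∈ Q
    · exact ⟨true, fun hc => absurd (hmeet _ h _ hc) (by decide)⟩
    · exact ⟨false, h⟩
  obtain ⟨a, hA⟩ := hA
  obtain ⟨b, hB⟩ := hB
  obtain ⟨c, hC⟩ := hC
  refine Or.inr (Or.inr (Or.inr (Or.inr ⟨a, b, c, fun p hp => ?_⟩)))
  rcases mem_fam2 a b c p with h|h|h|h|h|h|h|h|h|h
  · exact absurd h (hbot p hp)
  · exact absurd h (htop p hp)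
  · exact absurd (h ▸ hp) hs1
  · exact absurd (h ▸ hp) hs2
  · exact absurd (h ▸ hp) hs3
  · exact absurd (h ▸ hp) hs4
  · exact absurd (h ▸ hp) hA
  · exact absurd (h ▸ hp) hB
  · exact absurd (h ▸ hp) hC
  · exact h

variable {n₁ n₂ n₃ n₄ : ℕ}

lemma sum_star1 : ∑ p ∈ star1, wt4 n₁ n₂ n₃ n₄ p =
    n₁ + n₁*n₂ + n₁*n₃ + n₁*n₄ + n₁*n₂*n₃ + n₁*n₂*n₄ + n₁*n₃*n₄ := by
  rw [star1, Finset.sum_insert (by decide), Finset.sum_insert (by decide),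
    Finset.sum_insert (by decide), Finset.sum_insert (by decide),
    Finset.sum_insert (by decide), Finset.sum_insert (by decide), Finset.sum_singleton]
  simp [wt4]; ring

lemma sum_star2 : ∑ p ∈ star2, wt4 n₁ n₂ n₃ n₄ p =
    n₂ + n₁*n₂ + n₂*n₃ + n₂*n₄ + n₁*n₂*n₃ + n₁*n₂*n₄ + n₂*n₃*n₄ := by
  rw [star2, Finset.sum_insert (by decide), Finset.sum_insert (by decide),
    Finset.sum_insert (by decide), Finset.sum_insert (by decide),
    Finset.sum_insert (by decide), Finset.sum_insert (by decide), Finset.sum_singleton]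
  simp [wt4]; ring

lemma sum_star3 : ∑ p ∈ star3, wt4 n₁ n₂ n₃ n₄ p =
    n₃ + n₁*n₃ + n₂*n₃ + n₃*n₄ + n₁*n₂*n₃ + n₁*n₃*n₄ + n₂*n₃*n₄ := by
  rw [star3, Finset.sum_insert (by decide), Finset.sum_insert (by decide),
    Finset.sum_insert (by decide), Finset.sum_insert (by decide),
    Finset.sum_insert (by decide), Finset.sum_insert (by decide), Finset.sum_singleton]
  simp [wt4]; ring

lemma sum_star4 : ∑ p ∈ star4, wt4 n₁ n₂ n₃ n₄ p =
    n₄ + n₁*n₄ + n₂*n₄ + n₃*n₄ + n₁*n₂*n₄ + n₁*n₃*n₄ + n₂*n₃*n₄ := by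
  rw [star4, Finset.sum_insert (by decide), Finset.sum_insert (by decide),
    Finset.sum_insert (by decide), Finset.sum_insert (by decide),
    Finset.sum_insert (by decide), Finset.sum_insert (by decide), Finset.sum_singleton]
  simp [wt4]; ring

lemma sum_fam2 (a b c : Bool) : ∑ p ∈ fam2 a b c, wt4 n₁ n₂ n₃ n₄ p =
    (n₁*n₂*n₃ + n₁*n₂*n₄ + n₁*n₃*n₄ + n₂*n₃*n₄) + (bif a then n₁*n₂ else n₃*n₄) +
      (bif b then n₁*n₃ else n₂*n₄) + (bif c then n₁*n₄ else n₂*n₃) := by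
  cases a <;> cases b <;> cases c <;>
    (rw [fam2, Finset.sum_insert (by decide), Finset.sum_insert (by decide),
      Finset.sum_insert (by decide), Finset.sum_insert (by decide),
      Finset.sum_insert (by decide), Finset.sum_insert (by decide), Finset.sum_singleton]
     simp [wt4, pairA, pairB, pairC]; ring)

lemma key_upper (h12 : n₂ ≤ n₁) (h23 : n₃ ≤ n₂) (h34 : n₄ ≤ n₃) (Q : Finset B4)
    (hbot : ∀ p ∈ Q, p ≠ (false,false,false,false))
    (htop : ∀ p ∈ Q, p ≠ (true,true,true,true))
    (hmeet : ∀ p ∈ Q, ∀ q ∈ Q, meetB p q = true) :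
    ∑ p ∈ Q, wt4 n₁ n₂ n₃ n₄ p ≤
      n₁ * (n₂ * n₃ + n₂ * n₄ + n₃ * n₄ + n₂ + n₃) +
        max (n₁ + n₁ * n₄) (max (n₂ * n₃ + n₂ * n₃ * n₄) (n₁ * n₄ + n₂ * n₃ * n₄)) := by
  have h13 : n₃ ≤ n₁ := le_trans h23 h12
  have h14 : n₄ ≤ n₁ := le_trans h34 h13
  have h24 : n₄ ≤ n₂ := le_trans h34 h23
  have hA1 : n₁ * (n₂ * n₃ + n₂ * n₄ + n₃ * n₄ + n₂ + n₃) + (n₁ + n₁ * n₄) ≤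
      n₁ * (n₂ * n₃ + n₂ * n₄ + n₃ * n₄ + n₂ + n₃) +
        max (n₁ + n₁ * n₄) (max (n₂ * n₃ + n₂ * n₃ * n₄) (n₁ * n₄ + n₂ * n₃ * n₄)) :=
    Nat.add_le_add_left (le_max_left _ _) _
  have hA2 : n₁ * (n₂ * n₃ + n₂ * n₄ + n₃ * n₄ + n₂ + n₃) + (n₂ * n₃ + n₂ * n₃ * n₄) ≤
      n₁ * (n₂ * n₃ + n₂ * n₄ + n₃ * n₄ + n₂ + n₃) +
        max (n₁ + n₁ * n₄) (max (n₂ * n₃ + n₂ * n₃ * n₄) (n₁ * n₄ + n₂ * n₃ * n₄)) :=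
    Nat.add_le_add_left (le_trans (le_max_left _ _) (le_max_right _ _)) _
  have hA3 : n₁ * (n₂ * n₃ + n₂ * n₄ + n₃ * n₄ + n₂ + n₃) + (n₁ * n₄ + n₂ * n₃ * n₄) ≤
      n₁ * (n₂ * n₃ + n₂ * n₄ + n₃ * n₄ + n₂ + n₃) +
        max (n₁ + n₁ * n₄) (max (n₂ * n₃ + n₂ * n₃ * n₄) (n₁ * n₄ + n₂ * n₃ * n₄)) :=
    Nat.add_le_add_left (le_trans (le_max_right _ _) (le_max_right _ _)) _
  have m1 : n₂*n₃ ≤ n₁*n₃ := Nat.mul_le_mul h12 le_rfl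
  have m2 : n₂*n₄ ≤ n₁*n₄ := Nat.mul_le_mul h12 le_rfl
  have m3 : n₂*n₃*n₄ ≤ n₁*n₃*n₄ := Nat.mul_le_mul m1 le_rfl
  have m4 : n₁*n₃ ≤ n₁*n₂ := Nat.mul_le_mul le_rfl h23
  have m5 : n₃*n₄ ≤ n₁*n₄ := Nat.mul_le_mul h13 le_rfl
  have m6 : n₂*n₃*n₄ ≤ n₁*n₂*n₄ := by
    calc n₂*n₃*n₄ = n₂*(n₃*n₄) := by ring
    _ ≤ n₁*(n₂*n₄) := Nat.mul_le_mul h12 (Nat.mul_le_mul h23 le_rfl)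
    _ = n₁*n₂*n₄ := by ring
  have m7 : n₁*n₄ ≤ n₁*n₂ := Nat.mul_le_mul le_rfl h24
  have m8 : n₂*n₄ ≤ n₁*n₃ := Nat.mul_le_mul h12 h34
  have m10 : n₂*n₃*n₄ ≤ n₁*n₂*n₃ := by
    calc n₂*n₃*n₄ = n₄*(n₂*n₃) := by ring
    _ ≤ n₁*(n₂*n₃) := Nat.mul_le_mul h14 le_rfl
    _ = n₁*n₂*n₃ := by ring
  have m11 : n₃*n₄ ≤ n₁*n₂ := Nat.mul_le_mul h13 h24
  rcases cover Q hbot htop hmeet with h | h | h | h | ⟨a, b, c, h⟩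
  · refine le_trans (Finset.sum_le_sum_of_subset h) ?_
    rw [sum_star1]; exact le_trans (le_of_eq (by ring)) hA1
  · refine le_trans (Finset.sum_le_sum_of_subset h) ?_
    rw [sum_star2]; refine le_trans ?_ hA1; linarith [m1, m2, m3]
  · refine le_trans (Finset.sum_le_sum_of_subset h) ?_
    rw [sum_star3]; refine le_trans ?_ hA1; linarith [h13, m4, m1, m5, m6]
  · refine le_trans (Finset.sum_le_sum_of_subset h) ?_
    rw [sum_star4]; refine le_trans ?_ hA1; linarith [h14, m7, m8, m5, m10]
  · refine le_trans (Finset.sum_le_sum_of_subset h) ?_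
    rw [sum_fam2]
    have ha : (bif a then n₁*n₂ else n₃*n₄) ≤ n₁*n₂ := by cases a <;> simp [m11]
    have hb : (bif b then n₁*n₃ else n₂*n₄) ≤ n₁*n₃ := by cases b <;> simp [m8]
    cases c
    · refine le_trans ?_ hA2; simp only [Bool.cond_false]; linarith [ha, hb]
    · refine le_trans ?_ hA3; simp only [Bool.cond_true]; linarith [ha, hb]


open Classical in
/-- support pattern of an element of a 4-fold product -/
noncomputable def supp4 {F₁ F₂ F₃ F₄ : Type*} [Zero F₁] [Zero F₂] [Zero F₃] [Zero F₄]
    (x : F₁ × F₂ × F₃ × F₄) : Bool × Bool × Bool × Bool :=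
  (decide (x.1 ≠ 0), decide (x.2.1 ≠ 0), decide (x.2.2.1 ≠ 0), decide (x.2.2.2 ≠ 0))

section fields
variable {F₁ F₂ F₃ F₄ : Type*} [Field F₁] [Field F₂] [Field F₃] [Field F₄]

open Classical

lemma supp4_eq_bot_iff (x : F₁ × F₂ × F₃ × F₄) :
    supp4 x = (false, false, false, false) ↔ x = 0 := by
  simp only [supp4, Prod.mk.injEq, decide_eq_false_iff_not, not_not, Prod.ext_iff]
  exact Iff.rfl

lemma mul_eq_zero_iff_meet (x y : F₁ × F₂ × F₃ × F₄) :
    x * y = 0 ↔ meetB (supp4 x) (supp4 y) = false := by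
  simp only [meetB, supp4, Bool.or_eq_false_iff, Bool.and_eq_false_iff,
    decide_eq_false_iff_not, not_not, Prod.ext_iff, Prod.fst_mul, Prod.snd_mul,
    Prod.fst_zero, Prod.snd_zero]
  constructor
  · rintro ⟨a, b, c, d⟩
    exact ⟨⟨⟨mul_eq_zero.mp a, mul_eq_zero.mp b⟩, mul_eq_zero.mp c⟩, mul_eq_zero.mp d⟩
  · rintro ⟨⟨⟨a, b⟩, c⟩, d⟩
    exact ⟨mul_eq_zero.mpr a, mul_eq_zero.mpr b, mul_eq_zero.mpr c, mul_eq_zero.mpr d⟩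

lemma isZD_iff (x : F₁ × F₂ × F₃ × F₄) :
    (∃ y ≠ 0, x * y = 0) ↔ supp4 x ≠ (true, true, true, true) := by
  constructor
  · rintro ⟨y, hy, hxy⟩ htop
    rw [mul_eq_zero_iff_meet] at hxy
    rw [htop] at hxy
    simp only [meetB, Bool.true_and, Bool.or_eq_false_iff] at hxy
    apply hy
    rw [← supp4_eq_bot_iff]
    simp only [supp4, Prod.mk.injEq]
    exact ⟨hxy.1.1.1, hxy.1.1.2, hxy.1.2, hxy.2⟩
  · intro htop
    simp only [supp4, ne_eq, Prod.mk.injEq, not_and_or, decide_eq_true_eq, not_not] at htop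
    rcases htop with h | h | h | h
    · exact ⟨(1, 0, 0, 0), by simp [Prod.ext_iff], by simp [Prod.ext_iff, h]⟩
    · exact ⟨(0, 1, 0, 0), by simp [Prod.ext_iff], by simp [Prod.ext_iff, h]⟩
    · exact ⟨(0, 0, 1, 0), by simp [Prod.ext_iff], by simp [Prod.ext_iff, h]⟩
    · exact ⟨(0, 0, 0, 1), by simp [Prod.ext_iff], by simp [Prod.ext_iff, h]⟩

lemma card_decide (F : Type*) [Field F] [Finite F] {n : ℕ}
    (h : Nat.card {a : F // a ≠ 0} = n) (b : Bool) :
    Nat.card {a : F // decide (a ≠ 0) = b} = bif b then n else 1 := by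
  cases b
  · have : Unique {a : F // decide (a ≠ 0) = false} := by
      refine ⟨⟨⟨0, by simp⟩⟩, ?_⟩
      rintro ⟨a, ha⟩
      simp only [decide_eq_false_iff_not, not_not] at ha
      simp [ha]
    simp [Nat.card_unique]
  · rw [← h]
    exact Nat.card_congr (Equiv.subtypeEquivRight (fun a => by simp))

lemma card_supp4 [Finite F₁] [Finite F₂] [Finite F₃] [Finite F₄] {n₁ n₂ n₃ n₄ : ℕ}
    (h₁ : Nat.card {x : F₁ // x ≠ 0} = n₁) (h₂ : Nat.card {x : F₂ // x ≠ 0} = n₂)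
    (h₃ : Nat.card {x : F₃ // x ≠ 0} = n₃) (h₄ : Nat.card {x : F₄ // x ≠ 0} = n₄)
    (p : Bool × Bool × Bool × Bool) :
    Nat.card {x : F₁ × F₂ × F₃ × F₄ // supp4 x = p} = wt4 n₁ n₂ n₃ n₄ p := by
  have e : {x : F₁ × F₂ × F₃ × F₄ // supp4 x = p} ≃
      {a : F₁ // decide (a ≠ 0) = p.1} × {a : F₂ // decide (a ≠ 0) = p.2.1} ×
      {a : F₃ // decide (a ≠ 0) = p.2.2.1} × {a : F₄ // decide (a ≠ 0) = p.2.2.2} := by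
    refine ⟨fun x => ?_, fun a => ?_, ?_, ?_⟩
    · obtain ⟨x, hx⟩ := x
      simp only [supp4, Prod.ext_iff] at hx
      exact (⟨x.1, hx.1⟩, ⟨x.2.1, hx.2.1⟩, ⟨x.2.2.1, hx.2.2.1⟩, ⟨x.2.2.2, hx.2.2.2⟩)
    · exact ⟨(a.1.1, a.2.1.1, a.2.2.1.1, a.2.2.2.1), by
        simp only [supp4, Prod.ext_iff]
        exact ⟨a.1.2, a.2.1.2, a.2.2.1.2, a.2.2.2.2⟩⟩
    · rintro ⟨⟨a, b, c, d⟩, hx⟩; rfl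
    · rintro ⟨⟨a, _⟩, ⟨b, _⟩, ⟨c, _⟩, ⟨d, _⟩⟩; rfl
  rw [Nat.card_congr e]
  rw [Nat.card_prod, Nat.card_prod, Nat.card_prod]
  rw [card_decide F₁ h₁, card_decide F₂ h₂, card_decide F₃ h₃, card_decide F₄ h₄]
  simp [wt4, mul_assoc]

end fields


theorem stmt13 (F₁ F₂ F₃ F₄ : Type*) [Field F₁] [Field F₂] [Field F₃] [Field F₄]
    [Finite F₁] [Finite F₂] [Finite F₃] [Finite F₄] (n₁ n₂ n₃ n₄ : ℕ)
    (h₁ : Nat.card {x : F₁ // x ≠ 0} = n₁) (h₂ : Nat.card {x : F₂ // x ≠ 0} = n₂)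
    (h₃ : Nat.card {x : F₃ // x ≠ 0} = n₃) (h₄ : Nat.card {x : F₄ // x ≠ 0} = n₄)
    (h12 : n₂ ≤ n₁) (h23 : n₃ ≤ n₂) (h34 : n₄ ≤ n₃)
 :
    indepNum (zdvGraph (F₁ × F₂ × F₃ × F₄)) =
      n₁ * (n₂ * n₃ + n₂ * n₄ + n₃ * n₄ + n₂ + n₃) +
        max (n₁ + n₁ * n₄) (max (n₂ * n₃ + n₂ * n₃ * n₄) (n₁ * n₄ + n₂ * n₃ * n₄)) := by
  classical
  letI : Fintype (F₁ × F₂ × F₃ × F₄) := Fintype.ofFinite _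
  letI : Fintype {x : F₁ × F₂ × F₃ × F₄ // x ≠ 0 ∧ ∃ y ≠ 0, x * y = 0} := Fintype.ofFinite _
  set T := F₁ × F₂ × F₃ × F₄ with hT
  set V := {x : T // x ≠ 0 ∧ ∃ y ≠ 0, x * y = 0} with hVdef
  set A := n₁ * (n₂ * n₃ + n₂ * n₄ + n₃ * n₄ + n₂ + n₃) +
        max (n₁ + n₁ * n₄) (max (n₂ * n₃ + n₂ * n₃ * n₄) (n₁ * n₄ + n₂ * n₃ * n₄)) with hA
  set S := {n | ∃ s : Finset V, (s : Set V).Pairwise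
      (fun a b => ¬ (zdvGraph T).Adj a b) ∧ s.card = n} with hS
  have hbdd : BddAbove S := by
    refine ⟨Fintype.card V, ?_⟩
    rintro n ⟨s, -, rfl⟩
    exact le_trans (Finset.card_le_univ s) (le_of_eq (Finset.card_univ))
  have hub : ∀ n ∈ S, n ≤ A := by
    rintro n ⟨s, hpw, rfl⟩
    set f : V → B4 := fun v => supp4 (v : T) with hf
    set Q := s.image f with hQ
    have hbot : ∀ p ∈ Q, p ≠ (false,false,false,false) := by
      rintro p hp h
      obtain ⟨v, hv, rfl⟩ := Finset.mem_image.mp hp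
      exact v.2.1 ((supp4_eq_bot_iff (v : T)).mp h)
    have htop : ∀ p ∈ Q, p ≠ (true,true,true,true) := by
      rintro p hp h
      obtain ⟨v, hv, rfl⟩ := Finset.mem_image.mp hp
      exact (isZD_iff (v : T)).mp v.2.2 h
    have hmeet : ∀ p ∈ Q, ∀ q ∈ Q, meetB p q = true := by
      rintro p hp q hq
      obtain ⟨v, hv, rfl⟩ := Finset.mem_image.mp hp
      obtain ⟨w, hw, rfl⟩ := Finset.mem_image.mp hq
      cases hmb : meetB (f v) (f w) with
      | true => rfl
      | false =>
        exfalso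
        have hmul : (v : T) * (w : T) = 0 := (mul_eq_zero_iff_meet _ _).mpr hmb
        by_cases hvw : v = w
        · subst hvw
          have hself : ∀ p : B4, meetB p p = false → p = (false,false,false,false) := by decide
          exact v.2.1 ((supp4_eq_bot_iff (v : T)).mp (hself _ hmb))
        · exact hpw (Finset.mem_coe.mpr hv) (Finset.mem_coe.mpr hw) hvw ⟨hvw, hmul⟩
    calc s.card = ∑ p ∈ Q, (s.filter fun v => f v = p).card :=
          Finset.card_eq_sum_card_fiberwise fun v hv => Finset.mem_image_of_mem f hv
      _ ≤ ∑ p ∈ Q, wt4 n₁ n₂ n₃ n₄ p := by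
          refine Finset.sum_le_sum fun p hp => ?_
          have step : (s.filter fun v => f v = p).card ≤
              (Finset.univ.filter fun x : T => supp4 x = p).card := by
            refine Finset.card_le_card_of_injOn (fun v => (v : T)) (fun v hv => ?_)
              (fun v _ w _ h => Subtype.ext h)
            exact Finset.mem_filter.mpr ⟨Finset.mem_univ _, (Finset.mem_filter.mp hv).2⟩
          refine le_trans step (le_of_eq ?_)
          rw [← Fintype.card_subtype, ← Nat.card_eq_fintype_card,
            card_supp4 h₁ h₂ h₃ h₄]
      _ ≤ A := key_upper h12 h23 h34 Q hbot htop hmeet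
  have hlow : ∀ M : Finset B4, (∀ p ∈ M, p ≠ (false,false,false,false)) →
      (∀ p ∈ M, p ≠ (true,true,true,true)) →
      (∀ p ∈ M, ∀ q ∈ M, meetB p q = true) →
      (∑ p ∈ M, wt4 n₁ n₂ n₃ n₄ p) ∈ S := by
    intro M hbot htop hmeet
    refine ⟨Finset.univ.filter fun v : V => supp4 (v : T) ∈ M, ?_, ?_⟩
    · intro v hv w hw hvw hadj
      obtain ⟨-, hmul⟩ := hadj
      rw [mul_eq_zero_iff_meet] at hmul
      have hv' : supp4 (v : T) ∈ M := (Finset.mem_filter.mp (Finset.mem_coe.mp hv)).2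
      have hw' : supp4 (w : T) ∈ M := (Finset.mem_filter.mp (Finset.mem_coe.mp hw)).2
      have := hmeet _ hv' _ hw'
      rw [hmul] at this
      exact Bool.false_ne_true this
    · rw [Finset.card_eq_sum_card_fiberwise
        (f := fun v : V => supp4 (v : T)) (s := Finset.univ.filter fun v : V => supp4 (v : T) ∈ M) (t := M)
        (fun v hv => (Finset.mem_filter.mp hv).2)]
      refine Finset.sum_congr rfl fun p hp => ?_
      rw [← card_supp4 h₁ h₂ h₃ h₄ p, Nat.card_eq_fintype_card, Fintype.card_subtype]
      refine Finset.card_bij (fun v _ => (v : T)) ?_ ?_ ?_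
      · intro v hv
        simp only [Finset.mem_filter] at hv ⊢
        exact ⟨Finset.mem_univ _, hv.2⟩
      · intro v _ w _ h; exact Subtype.ext h
      · intro x hx
        simp only [Finset.mem_filter] at hx
        have hxp := hx.2
        have hxb : x ≠ 0 := by
          intro h0
          exact hbot p hp (by rw [← hxp, h0]; exact (supp4_eq_bot_iff (0 : T)).mpr rfl)
        have hxt : ∃ y ≠ 0, x * y = 0 := (isZD_iff x).mpr (fun h => htop p hp (hxp ▸ h))
        refine ⟨⟨x, hxb, hxt⟩, ?_, rfl⟩
        simp only [Finset.mem_filter]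
        exact ⟨⟨Finset.mem_univ _, hxp ▸ hp⟩, hxp⟩
  have hfirst : ∀ k : ℕ, n₁ * (n₂ * n₃ + n₂ * n₄ + n₃ * n₄ + n₂ + n₃) + k ∈ S →
      n₁ * (n₂ * n₃ + n₂ * n₄ + n₃ * n₄ + n₂ + n₃) + k ≤ indepNum (zdvGraph T) := by
    intro k hk
    rw [indepNum]
    exact le_csSup hbdd hk
  have g1 : n₁ * (n₂ * n₃ + n₂ * n₄ + n₃ * n₄ + n₂ + n₃) + (n₁ + n₁ * n₄) ≤
      indepNum (zdvGraph T) := by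
    refine hfirst _ ?_
    have e1 : n₁ * (n₂ * n₃ + n₂ * n₄ + n₃ * n₄ + n₂ + n₃) + (n₁ + n₁ * n₄) =
        ∑ p ∈ star1, wt4 n₁ n₂ n₃ n₄ p := by rw [sum_star1]; ring
    rw [e1]
    exact hlow star1 (by decide) (by decide) (by decide)
  have g2 : n₁ * (n₂ * n₃ + n₂ * n₄ + n₃ * n₄ + n₂ + n₃) + (n₂ * n₃ + n₂ * n₃ * n₄) ≤
      indepNum (zdvGraph T) := by
    refine hfirst _ ?_
    have e2 : n₁ * (n₂ * n₃ + n₂ * n₄ + n₃ * n₄ + n₂ + n₃) + (n₂ * n₃ + n₂ * n₃ * n₄) =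
        ∑ p ∈ fam2 true true false, wt4 n₁ n₂ n₃ n₄ p := by
      rw [sum_fam2]; simp only [Bool.cond_true, Bool.cond_false]; ring
    rw [e2]
    exact hlow (fam2 true true false) (by decide) (by decide) (by decide)
  have g3 : n₁ * (n₂ * n₃ + n₂ * n₄ + n₃ * n₄ + n₂ + n₃) + (n₁ * n₄ + n₂ * n₃ * n₄) ≤
      indepNum (zdvGraph T) := by
    refine hfirst _ ?_
    have e3 : n₁ * (n₂ * n₃ + n₂ * n₄ + n₃ * n₄ + n₂ + n₃) + (n₁ * n₄ + n₂ * n₃ * n₄) =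
        ∑ p ∈ fam2 true true true, wt4 n₁ n₂ n₃ n₄ p := by
      rw [sum_fam2]; simp only [Bool.cond_true]; ring
    rw [e3]
    exact hlow (fam2 true true true) (by decide) (by decide) (by decide)
  refine le_antisymm ?_ ?_
  · rw [indepNum]
    refine csSup_le ⟨0, ∅, by simp, rfl⟩ hub
  · rcases max_choice (n₁ + n₁ * n₄) (max (n₂ * n₃ + n₂ * n₃ * n₄) (n₁ * n₄ + n₂ * n₃ * n₄))
        with h | h
    · rw [hA, h]; exact g1
    · rcases max_choice (n₂ * n₃ + n₂ * n₃ * n₄) (n₁ * n₄ + n₂ * n₃ * n₄) with h' | h'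
      · rw [hA, h, h']; exact g2
      · rw [hA, h, h']; exact g3
end

section
/- Let (R, m) be a finite commutative local ring with identity 1 ≠ 0 and maximal ideal m ≠ {0}. If m² ≠ {0}, then 2 ≤ α(Γ(R)) ≤ |Z*(R)| − |Ann(Z(R)) \ {0}|, where Ann(Z(R)) = {r ∈ R : rz = 0 for all z ∈ Z(R)}. -/
/-- In a finite ring, every non-unit is a zero divisor. -/
lemma nonunit_zd {R : Type*} [CommRing R] [Finite R] {x : R} (hx : ¬ IsUnit x) :
    ∃ y ≠ 0, x * y = 0 := by
  have hni : ¬ Function.Injective (fun y : R => x * y) := by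
    intro hinj
    obtain ⟨y, hy⟩ := (Finite.injective_iff_surjective.mp hinj) 1
    exact hx (IsUnit.of_mul_eq_one _ hy)
  obtain ⟨a, b, hab, hne⟩ := Function.not_injective_iff.mp hni
  refine ⟨a - b, sub_ne_zero.mpr hne, ?_⟩
  simp only [mul_sub, hab, sub_self]

theorem stmt16 (R : Type*) [CommRing R] [IsLocalRing R] [Finite R]
    (hm : IsLocalRing.maximalIdeal R ≠ ⊥)
    (hm2 : (IsLocalRing.maximalIdeal R) ^ 2 ≠ ⊥) :
    2 ≤ indepNum (zdvGraph R) ∧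
      indepNum (zdvGraph R) ≤
        Nat.card {x : R // x ≠ 0 ∧ ∃ y ≠ 0, x * y = 0} -
          ({r : R | ∀ z : R, (∃ y ≠ 0, z * y = 0) → r * z = 0} \ {0}).ncard := by
  classical
  set M := IsLocalRing.maximalIdeal R with hM
  set V' : Set R := {x : R | x ≠ 0 ∧ ∃ y ≠ 0, x * y = 0} with hV'
  set A' : Set R := {r : R | ∀ z : R, (∃ y ≠ 0, z * y = 0) → r * z = 0} \ {0} with hA'
  -- zero divisors from membership in M
  have zd_of_mem : ∀ x : R, x ∈ M → ∃ y ≠ 0, x * y = 0 := fun x hx =>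
    nonunit_zd ((IsLocalRing.mem_maximalIdeal x).mp hx)
  -- two elements of M with nonzero product
  have hab : ∃ a ∈ M, ∃ b ∈ M, a * b ≠ 0 := by
    by_contra h
    push_neg at h
    apply hm2
    rw [pow_two, ← le_bot_iff]
    exact Ideal.mul_le.mpr fun r hr s hs => (Submodule.mem_bot R).mpr (h r hr s hs)
  obtain ⟨a, ha, b, hb, hab0⟩ := hab
  -- distinct elements of M with nonzero product
  have key : ∃ u ∈ M, ∃ v ∈ M, u ≠ v ∧ u * v ≠ 0 := by
    by_cases hne : a = b
    · subst hne
      have ha0 : a ≠ 0 := fun h => hab0 (by rw [h, mul_zero])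
      have haa : a ≠ a * a := by
        intro h
        have h1 : a * (1 - a) = 0 := by rw [mul_sub, mul_one, ← h, sub_self]
        have hu : IsUnit (1 - a) :=
          IsLocalRing.isUnit_one_sub_self_of_mem_nonunits a ha
        rw [mul_comm] at h1
        exact ha0 ((hu.mul_right_eq_zero).mp h1)
      by_cases h3 : a * (a * a) = 0
      · refine ⟨a, ha, a + a * a, M.add_mem ha (M.mul_mem_left a ha), ?_, ?_⟩
        · intro h; exact hab0 ((left_eq_add.mp h))
        · rw [mul_add, h3, add_zero]; exact hab0
      · exact ⟨a, ha, a * a, M.mul_mem_left a ha, haa, h3⟩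
    · exact ⟨a, ha, b, hb, hne, hab0⟩
  obtain ⟨u, hu, v, hv, huv, huv0⟩ := key
  have hu0 : u ≠ 0 := left_ne_zero_of_mul huv0
  have hv0 : v ≠ 0 := right_ne_zero_of_mul huv0
  have huV : u ∈ V' := ⟨hu0, zd_of_mem u hu⟩
  have hvV : v ∈ V' := ⟨hv0, zd_of_mem v hv⟩
  set U : {x : R // x ≠ 0 ∧ ∃ y ≠ 0, x * y = 0} := ⟨u, huV⟩ with hU
  set W : {x : R // x ≠ 0 ∧ ∃ y ≠ 0, x * y = 0} := ⟨v, hvV⟩ with hW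
  have hUW : U ≠ W := fun h => huv (congrArg Subtype.val h)
  haveI : Fintype {x : R // x ≠ 0 ∧ ∃ y ≠ 0, x * y = 0} := Fintype.ofFinite _
  -- the set of achievable cardinalities is bounded above
  have hbdd : BddAbove {n | ∃ s : Finset {x : R // x ≠ 0 ∧ ∃ y ≠ 0, x * y = 0},
      (s : Set _).Pairwise (fun a b => ¬ (zdvGraph R).Adj a b) ∧ s.card = n} := by
    refine ⟨Fintype.card {x : R // x ≠ 0 ∧ ∃ y ≠ 0, x * y = 0}, fun n hn => ?_⟩
    obtain ⟨s, _, rfl⟩ := hn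
    exact Finset.card_le_univ s
  -- the independent pair {U, W}
  have hmem2 : (2 : ℕ) ∈ {n | ∃ s : Finset {x : R // x ≠ 0 ∧ ∃ y ≠ 0, x * y = 0},
      (s : Set _).Pairwise (fun a b => ¬ (zdvGraph R).Adj a b) ∧ s.card = n} := by
    refine ⟨{U, W}, ?_, ?_⟩
    · intro x hx y hy hxy hadj
      simp only [Finset.coe_insert, Finset.coe_singleton, Set.mem_insert_iff,
        Set.mem_singleton_iff] at hx hy
      rcases hx with rfl | rfl <;> rcases hy with rfl | rfl
      · exact hxy rfl
      · exact huv0 hadj.2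
      · exact huv0 (by rw [mul_comm]; exact hadj.2)
      · exact hxy rfl
    · rw [Finset.card_insert_of_notMem (by simpa using hUW), Finset.card_singleton]
  have hlow : 2 ≤ indepNum (zdvGraph R) := le_csSup hbdd hmem2
  refine ⟨hlow, ?_⟩
  -- A' ⊆ V'
  have hA'V : A' ⊆ V' := by
    rintro r ⟨hr, hr0⟩
    simp only [Set.mem_singleton_iff] at hr0
    obtain ⟨z, hzM, hz0⟩ := Submodule.exists_mem_ne_zero_of_ne_bot hm
    exact ⟨hr0, z, hz0, hr z (zd_of_mem z hzM)⟩
  -- u, v ∉ A'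
  have huA : u ∉ A' := fun ⟨h, _⟩ => huv0 (h v (zd_of_mem v hv))
  have hvA : v ∉ A' := fun ⟨h, _⟩ => huv0 (by rw [mul_comm]; exact h u (zd_of_mem u hu))
  -- bound B ≥ 2
  have hcardV : Nat.card {x : R // x ≠ 0 ∧ ∃ y ≠ 0, x * y = 0} = V'.ncard :=
    Nat.card_coe_set_eq V'
  have hdiff : (V' \ A').ncard = V'.ncard - A'.ncard := Set.ncard_diff hA'V (Set.toFinite _)
  have hB2 : 2 ≤ Nat.card {x : R // x ≠ 0 ∧ ∃ y ≠ 0, x * y = 0} - A'.ncard := by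
    rw [hcardV, ← hdiff]
    have : 1 < (V' \ A').ncard := by
      rw [Set.one_lt_ncard (Set.toFinite _)]
      exact ⟨u, ⟨huV, huA⟩, v, ⟨hvV, hvA⟩, huv⟩
    omega
  -- upper bound
  refine csSup_le ⟨0, ⟨∅, by simp⟩⟩ fun n hn => ?_
  obtain ⟨s, hpair, rfl⟩ := hn
  rcases le_or_gt s.card 2 with hle | hgt
  · exact hle.trans hB2
  · -- s has at least 2 elements, hence is disjoint from A'
    have hsub : (↑(s.image Subtype.val) : Set R) ⊆ V' \ A' := by
      intro x hx
      simp only [Finset.coe_image, Set.mem_image, Finset.mem_coe] at hx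
      obtain ⟨w, hw, rfl⟩ := hx
      refine ⟨w.2, fun hwA => ?_⟩
      obtain ⟨w', hw', hww'⟩ := Finset.exists_mem_ne (lt_trans one_lt_two hgt) w
      exact hpair hw hw' (Ne.symm hww') ⟨Ne.symm hww', hwA.1 w'.1 w'.2.2⟩
    have hcardim : s.card = (s.image Subtype.val).card :=
      (Finset.card_image_of_injective s Subtype.val_injective).symm
    calc s.card = (↑(s.image Subtype.val) : Set R).ncard := by
          rw [Set.ncard_coe_finset]; exact hcardim
      _ ≤ (V' \ A').ncard := Set.ncard_le_ncard hsub (Set.toFinite _)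
      _ = _ := by rw [hdiff, hcardV]
end

section
/- Let m be a composite natural number. If m = p² for some prime p, then the ideal-based zero-divisor graph Γ_{mℤ}(ℤ) of the ring ℤ with respect to the ideal mℤ is a complete graph and its independence number equals 1. Otherwise (m composite but not the square of a prime), Γ_{mℤ}(ℤ) has an infinite independent set, so its independence number is infinite. -/
/-- The ideal-based zero-divisor graph `Γ_I(R)`: vertices are the elements
`x ∈ R \ I` such that `x * y ∈ I` for some `y ∈ R \ I`, with distinct vertices
`x`, `y` adjacent iff `x * y ∈ I`. -/
def idlGraph (R : Type*) [CommRing R] (I : Ideal R) :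
    SimpleGraph {x : R // x ∉ I ∧ ∃ y ∉ I, x * y ∈ I} where
  Adj x y := x ≠ y ∧ (x : R) * y ∈ I
  symm := ⟨fun x y ⟨hxy, h⟩ => ⟨hxy.symm, by rwa [mul_comm]⟩⟩
  loopless := ⟨fun x ⟨h, _⟩ => h rfl⟩

theorem stmt17 (m : ℕ) (h2 : 2 ≤ m) (hnp : ¬ m.Prime) :
    (∀ p : ℕ, p.Prime → m = p ^ 2 →
      (∀ x y : {x : ℤ // x ∉ Ideal.span {(m : ℤ)} ∧
          ∃ y ∉ Ideal.span {(m : ℤ)}, x * y ∈ Ideal.span {(m : ℤ)}},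
        x ≠ y → (idlGraph ℤ (Ideal.span {(m : ℤ)})).Adj x y) ∧
      indepNum (idlGraph ℤ (Ideal.span {(m : ℤ)})) = 1) ∧
    ((¬ ∃ p : ℕ, p.Prime ∧ m = p ^ 2) →
      ∃ S : Set {x : ℤ // x ∉ Ideal.span {(m : ℤ)} ∧
          ∃ y ∉ Ideal.span {(m : ℤ)}, x * y ∈ Ideal.span {(m : ℤ)}},
        S.Infinite ∧ S.Pairwise fun a b => ¬ (idlGraph ℤ (Ideal.span {(m : ℤ)})).Adj a b) := by
  constructor
  · rintro p hp rfl
    have hpz : Prime (p : ℤ) := Nat.prime_iff_prime_int.mp hp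
    have hcast : ((p ^ 2 : ℕ) : ℤ) = (p : ℤ) ^ 2 := by push_cast; ring
    -- every vertex is divisible by p
    have key : ∀ x : {x : ℤ // x ∉ Ideal.span {((p^2 : ℕ) : ℤ)} ∧
        ∃ y ∉ Ideal.span {((p^2 : ℕ) : ℤ)}, x * y ∈ Ideal.span {((p^2 : ℕ) : ℤ)}},
        (p : ℤ) ∣ (x : ℤ) := by
      rintro ⟨x, hx, y, hy, hxy⟩
      show (p : ℤ) ∣ x
      rw [Ideal.mem_span_singleton, hcast] at hxy hy
      by_contra hpx
      have h1 : (p : ℤ) ∣ x * y := dvd_trans (dvd_pow_self _ two_ne_zero) hxy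
      rcases hpz.dvd_mul.mp h1 with h | h
      · exact hpx h
      obtain ⟨c, rfl⟩ := h
      have h2' : (p : ℤ) ∣ x * c := by
        have he : x * ((p:ℤ) * c) = (p:ℤ) * ((p:ℤ) * (x * c) / (p:ℤ)) := by
          rw [Int.mul_ediv_cancel_left _ hpz.ne_zero]; ring
        have he2 : x * ((p:ℤ) * c) = (p:ℤ) * (x * c) := by ring
        rw [he2, sq] at hxy
        exact (mul_dvd_mul_iff_left hpz.ne_zero).mp hxy
      rcases hpz.dvd_mul.mp h2' with h | h
      · exact hpx h
      · refine hy ?_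
        rw [sq]
        exact mul_dvd_mul_left _ h
    have complete : ∀ x y : {x : ℤ // x ∉ Ideal.span {((p^2 : ℕ) : ℤ)} ∧
        ∃ y ∉ Ideal.span {((p^2 : ℕ) : ℤ)}, x * y ∈ Ideal.span {((p^2 : ℕ) : ℤ)}},
        x ≠ y → (idlGraph ℤ (Ideal.span {((p^2 : ℕ) : ℤ)})).Adj x y := by
      intro x y hxy
      refine ⟨hxy, Ideal.mem_span_singleton.mpr ?_⟩
      obtain ⟨a, ha⟩ := key x
      obtain ⟨b, hb⟩ := key y
      exact ⟨a * b, by rw [ha, hb]; push_cast; ring⟩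
    refine ⟨complete, ?_⟩
    -- the vertex p
    have hpI : (p : ℤ) ∉ Ideal.span {((p^2 : ℕ) : ℤ)} := by
      rw [Ideal.mem_span_singleton, hcast]
      intro h
      have := Int.le_of_dvd (by exact_mod_cast hp.pos) h
      nlinarith [(by exact_mod_cast hp.two_le : (2:ℤ) ≤ p)]
    have hv : ((p : ℤ) ∉ Ideal.span {((p^2 : ℕ) : ℤ)} ∧
        ∃ y ∉ Ideal.span {((p^2 : ℕ) : ℤ)}, (p:ℤ) * y ∈ Ideal.span {((p^2 : ℕ) : ℤ)}) :=
      ⟨hpI, ⟨(p : ℤ), hpI, by rw [Ideal.mem_span_singleton, hcast, sq]⟩⟩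
    set v : {x : ℤ // x ∉ Ideal.span {((p^2 : ℕ) : ℤ)} ∧
        ∃ y ∉ Ideal.span {((p^2 : ℕ) : ℤ)}, x * y ∈ Ideal.span {((p^2 : ℕ) : ℤ)}} :=
      ⟨(p:ℤ), hv⟩ with hvdef
    have hbound : ∀ n ∈ {n | ∃ s : Finset {x : ℤ // x ∉ Ideal.span {((p^2 : ℕ) : ℤ)} ∧
        ∃ y ∉ Ideal.span {((p^2 : ℕ) : ℤ)}, x * y ∈ Ideal.span {((p^2 : ℕ) : ℤ)}},
        (s : Set _).Pairwise (fun a b => ¬ (idlGraph ℤ (Ideal.span {((p^2 : ℕ) : ℤ)})).Adj a b) ∧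
        s.card = n}, n ≤ 1 := by
      rintro n ⟨s, hs, rfl⟩
      rw [Finset.card_le_one]
      intro a ha b hb
      by_contra hab
      exact hs ha hb hab (complete a b hab)
    have h1mem : 1 ∈ {n | ∃ s : Finset {x : ℤ // x ∉ Ideal.span {((p^2 : ℕ) : ℤ)} ∧
        ∃ y ∉ Ideal.span {((p^2 : ℕ) : ℤ)}, x * y ∈ Ideal.span {((p^2 : ℕ) : ℤ)}},
        (s : Set _).Pairwise (fun a b => ¬ (idlGraph ℤ (Ideal.span {((p^2 : ℕ) : ℤ)})).Adj a b) ∧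
        s.card = n} := ⟨{v}, by simp, Finset.card_singleton v⟩
    unfold indepNum
    exact le_antisymm (csSup_le ⟨1, h1mem⟩ hbound) (le_csSup ⟨1, hbound⟩ h1mem)
  · intro hsq
    have hm0 : 0 < m := by omega
    obtain ⟨p, hp, hpd⟩ : ∃ p, p.Prime ∧ p ∣ m :=
      ⟨m.minFac, Nat.minFac_prime (by omega), Nat.minFac_dvd m⟩
    obtain ⟨t, ht⟩ := hpd
    have ht2 : 2 ≤ t := by
      rcases Nat.lt_or_ge t 2 with h | h
      · interval_cases t
        · omega
        · rw [mul_one] at ht; exact absurd (ht ▸ hp) hnp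
      · exact h
    have hptm : p < m := by nlinarith [hp.two_le]
    have httm : t < m := by nlinarith [hp.two_le]
    have hmp2 : ¬ ((m : ℤ) ∣ (p : ℤ) ^ 2) := by
      intro h
      have h' : m ∣ p ^ 2 := by exact_mod_cast h
      obtain ⟨i, hi, hmi⟩ := (Nat.dvd_prime_pow hp).mp h'
      interval_cases i
      · simp at hmi; omega
      · simp at hmi; omega
      · exact hsq ⟨p, hp, hmi⟩
    -- vertex data for p + k*m
    have hvert : ∀ k : ℕ, ((p : ℤ) + k * m ∉ Ideal.span {(m : ℤ)} ∧
        ∃ y ∉ Ideal.span {(m : ℤ)}, ((p : ℤ) + k * m) * y ∈ Ideal.span {(m : ℤ)}) := by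
      intro k
      refine ⟨?_, ⟨(t : ℤ), ?_, ?_⟩⟩
      · rw [Ideal.mem_span_singleton]
        intro h
        have hd : (m : ℤ) ∣ (p : ℤ) := by
          have := dvd_sub h (⟨k, mul_comm (k:ℤ) m⟩ : (m:ℤ) ∣ k * m)
          simpa using this
        have := Int.le_of_dvd (by exact_mod_cast hp.pos) hd
        have : m ≤ p := by exact_mod_cast this
        omega
      · rw [Ideal.mem_span_singleton]
        intro h
        have h1 := Int.le_of_dvd (by exact_mod_cast (by omega : 0 < t)) h
        have : m ≤ t := by exact_mod_cast h1
        omega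
      · rw [Ideal.mem_span_singleton]
        have hpt : (p : ℤ) * t = m := by exact_mod_cast ht.symm
        exact ⟨1 + k * t, by nlinarith [hpt]⟩
    refine ⟨Set.range (fun k : ℕ => ⟨(p : ℤ) + k * m, hvert k⟩), ?_, ?_⟩
    · apply Set.infinite_range_of_injective
      intro a b hab
      have h1 : (p : ℤ) + a * m = (p : ℤ) + b * m := congrArg Subtype.val hab
      have h2' : (a : ℤ) * m = b * m := by linarith
      have h3 : (a : ℤ) = b := by
        have hm : (m : ℤ) ≠ 0 := by exact_mod_cast hm0.ne'
        exact mul_right_cancel₀ hm h2'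
      exact_mod_cast h3
    · rintro _ ⟨a, rfl⟩ _ ⟨b, rfl⟩ hab hadj
      obtain ⟨hne, hmem⟩ := hadj
      rw [Ideal.mem_span_singleton] at hmem
      apply hmp2
      have he : ((p : ℤ) + a * m) * ((p : ℤ) + b * m) - (m : ℤ) * ((p:ℤ) * b + a * p + a * b * m)
          = (p:ℤ)^2 := by ring
      have hd : (m : ℤ) ∣ (m : ℤ) * ((p:ℤ) * b + a * p + a * b * m) := Dvd.intro _ rfl
      have := dvd_sub hmem hd
      rwa [he] at this
end
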